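/- Let p > 3 be a prime. For every integer k with 1 ≤ k ≤ p-1, we have k · binom(2k,k) · binom(2(p-k), p-k) ≡ (-1)^{⌊2k/p⌋ - 1} · 2p (mod p²). -/

import Mathlib

open Nat

lemma asc_cast (p m : ℕ) :
    (((p+1).ascFactorial m : ℕ) : ZMod p) = (m ! : ZMod p) := by
  rw [Nat.cast_ascFactorial, Nat.cast_factorial]
  congr 1
  push_cast [ZMod.natCast_self]
  ring

lemma choose_p_sub_one (p : ℕ) (hp : p.Prime) : ∀ a : ℕ, a ≤ p - 1 →
    (((p-1).choose a : ℕ) : ZMod p) = (-1)^a := by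
  intro a
  induction a with
  | zero => simp
  | succ a ih =>
    intro ha
    have ha' : a ≤ p - 1 := le_of_lt (Nat.lt_of_lt_of_le (Nat.lt_succ_self a) ha)
    have hps : p - 1 + 1 = p := Nat.succ_pred_eq_of_pos hp.pos
    have hpc : p ∣ p.choose (a+1) := hp.dvd_choose_self (Nat.succ_ne_zero a) (by omega)
    have h0 : ((p.choose (a+1) : ℕ) : ZMod p) = 0 :=
      (ZMod.natCast_eq_zero_iff _ _).mpr hpc
    have hpas : p.choose (a+1) = (p-1).choose a + (p-1).choose (a+1) := by
      conv_lhs => rw [← hps]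
      exact Nat.choose_succ_succ _ _
    rw [hpas] at h0
    push_cast at h0
    rw [ih ha'] at h0
    have h1 : (((p-1).choose (a+1) : ℕ) : ZMod p) = -(-1)^a :=
      eq_neg_of_add_eq_zero_right h0
    rw [h1, pow_succ]
    ring

/-- Wilson-type: `a! * (p-1-a)! ≡ (-1)^(a+1) (mod p)` for `a ≤ p-1`. -/
lemma fac_mul_fac (p : ℕ) (hp : p.Prime) [Fact p.Prime] (a : ℕ) (ha : a ≤ p - 1) :
    ((a ! : ℕ) : ZMod p) * ((p - 1 - a)! : ZMod p) = (-1)^(a+1) := by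
  have key : (p-1).choose a * a ! * (p - 1 - a)! = (p-1)! :=
    Nat.choose_mul_factorial_mul_factorial ha
  have := congrArg (fun n : ℕ => (n : ZMod p)) key
  push_cast at this
  rw [choose_p_sub_one p hp a ha, ZMod.wilsons_lemma] at this
  have hsq : ((-1 : ZMod p))^a * (-1)^a = 1 := by
    rw [← pow_add]; exact Even.neg_one_pow ⟨a, rfl⟩
  linear_combination ((-1 : ZMod p))^a * this
    - ((a ! : ZMod p) * ((p - 1 - a)! : ZMod p)) * hsq

/-- Main lemma: when `p ≤ 2k`, `k+j = p`, `j ≥ 1`. -/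
lemma main_dvd (p k j : ℕ) (hp : p.Prime) (hp3 : 3 < p) (hkj : k + j = p)
    (hj : 1 ≤ j) (h2k : p ≤ 2*k) :
    ((p:ℤ))^2 ∣ ((k:ℤ) * ((2*k).choose k : ℤ) * ((2*j).choose j : ℤ) - 2*p) := by
  haveI : Fact p.Prime := ⟨hp⟩
  have hk1 : 1 ≤ k := by omega
  have hkp : k < p := by omega
  have hjp : j < p := by omega
  obtain ⟨t, ht⟩ := hp.odd_of_ne_two (by omega)
  have h2jp : 2*j < p := by omega
  set m : ℕ := 2*k - p with hm
  have hmk : p + m = 2*k := by omega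
  have hmp : m < p := by omega
  -- factor (2k)! = p * N
  have hfac : (2*k)! = p * ((p-1)! * (p+1).ascFactorial m) := by
    have h := Nat.factorial_mul_ascFactorial p m
    rw [hmk] at h
    rw [← h, ← Nat.mul_factorial_pred hp.ne_zero, Nat.mul_assoc]
  -- p divides the central binomial C(2k,k)
  have hdvd : p ∣ (2*k).choose k := hp.dvd_choose hkp (by omega) h2k
  obtain ⟨c, hc⟩ := hdvd
  -- c * k!^2 = N
  have hck : c * (k ! * k !) = (p-1)! * (p+1).ascFactorial m := by
    have h1 : (2*k).choose k * k ! * (2*k - k)! = (2*k)! :=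
      Nat.choose_mul_factorial_mul_factorial (by omega)
    rw [show 2*k - k = k by omega, hc] at h1
    have h2 : p * (c * (k ! * k !)) = p * ((p-1)! * (p+1).ascFactorial m) := by
      rw [← hfac, ← h1]; ring
    exact Nat.eq_of_mul_eq_mul_left hp.pos h2
  -- pass to ZMod p
  have hcK : (c : ZMod p) * (k ! : ZMod p)^2 = -(m ! : ZMod p) := by
    have := congrArg (fun n : ℕ => (n : ZMod p)) hck
    push_cast at this
    rw [asc_cast, ZMod.wilsons_lemma] at this
    linear_combination this
  have hCj : (((2*j).choose j : ℕ) : ZMod p) * ((j ! : ℕ) : ZMod p)^2 = ((2*j)! : ZMod p) := by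
    have h1 : (2*j).choose j * j ! * (2*j - j)! = (2*j)! :=
      Nat.choose_mul_factorial_mul_factorial (by omega)
    rw [show 2*j - j = j by omega] at h1
    have := congrArg (fun n : ℕ => (n : ZMod p)) h1
    push_cast at this
    rw [← this]; ring
  have hW1 : ((k ! : ℕ) : ZMod p) * (((j-1)! : ℕ) : ZMod p) = (-1)^(k+1) := by
    have := fac_mul_fac p hp k (by omega)
    rwa [show p - 1 - k = j - 1 by omega] at this
  have hW2 : ((m ! : ℕ) : ZMod p) * (((2*j-1)! : ℕ) : ZMod p) = 1 := by
    have := fac_mul_fac p hp m (by omega)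
    rw [show p - 1 - m = 2*j - 1 by omega] at this
    rw [this]
    have hodd : Odd m := Nat.Even.sub_odd h2k (even_two_mul k) (hp.odd_of_ne_two (by omega))
    exact Even.neg_one_pow (hodd.add_one)
  -- nonvanishing facts
  have hfne : ∀ n : ℕ, n < p → ((n ! : ℕ) : ZMod p) ≠ 0 := by
    intro n hn h
    have := (ZMod.natCast_eq_zero_iff _ _).mp h
    have := (Nat.Prime.dvd_factorial hp).mp this
    omega
  have hjne : ((j : ℕ) : ZMod p) ≠ 0 := by
    intro h
    have := (ZMod.natCast_eq_zero_iff _ _).mp h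
    have := Nat.le_of_dvd (by omega) this
    omega
  -- reduce goal
  have hgoal : ((k : ZMod p) * (c : ZMod p) * (((2*j).choose j : ℕ) : ZMod p)) = 2 := by
    have hKJne : ((k ! : ℕ) : ZMod p)^2 * ((j ! : ℕ) : ZMod p)^2 ≠ 0 := by
      exact mul_ne_zero (pow_ne_zero _ (hfne k hkp)) (pow_ne_zero _ (hfne j hjp))
    apply mul_left_cancel₀ hKJne
    have hfj : (j ! : ℕ) = j * (j-1)! := (Nat.mul_factorial_pred (show j ≠ 0 by omega)).symm
    have hf2j : ((2*j)! : ℕ) = (2*j) * (2*j-1)! :=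
      (Nat.mul_factorial_pred (show 2*j ≠ 0 by omega)).symm
    have hkneg : ((k : ℕ) : ZMod p) = -((j : ℕ) : ZMod p) := by
      have : ((k + j : ℕ) : ZMod p) = ((p : ℕ) : ZMod p) := by rw [hkj]
      push_cast [ZMod.natCast_self] at this
      linear_combination this
    calc ((k ! : ℕ) : ZMod p)^2 * ((j ! : ℕ) : ZMod p)^2
          * ((k : ZMod p) * (c : ZMod p) * (((2*j).choose j : ℕ) : ZMod p))
        = (k : ZMod p) * ((c : ZMod p) * ((k ! : ℕ) : ZMod p)^2)
          * ((((2*j).choose j : ℕ) : ZMod p) * ((j ! : ℕ) : ZMod p)^2) := by ring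
      _ = (k : ZMod p) * (-(m ! : ZMod p)) * (((2*j)! : ℕ) : ZMod p) := by
          rw [hcK, hCj]
      _ = -(k : ZMod p) * ((2*j : ℕ) : ZMod p)
          * (((m !: ℕ) : ZMod p) * (((2*j-1)! : ℕ) : ZMod p)) := by
          rw [hf2j]; push_cast; ring
      _ = ((j : ℕ) : ZMod p) * ((2*j : ℕ) : ZMod p) := by rw [hW2, hkneg]; ring
      _ = 2 * (((j:ℕ) : ZMod p) * ((j : ℕ) : ZMod p)) := by push_cast; ring
      _ = 2 * (((j:ℕ) : ZMod p) * ((j : ℕ) : ZMod p))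
          * ((((k ! : ℕ) : ZMod p) * (((j-1)! : ℕ) : ZMod p))^2) := by
          have hone : ((-1 : ZMod p)^(k+1))^2 = 1 := by
            rw [← pow_mul]; exact Even.neg_one_pow ⟨k+1, by ring⟩
          rw [hW1, hone, mul_one]
      _ = ((k ! : ℕ) : ZMod p)^2 * ((j ! : ℕ) : ZMod p)^2 * 2 := by
          rw [hfj]; push_cast; ring
  -- lift back to ℤ
  have hint : (p:ℤ) ∣ ((k:ℤ) * (c:ℤ) * (((2*j).choose j : ℕ) : ℤ) - 2) := by
    apply (ZMod.intCast_zmod_eq_zero_iff_dvd _ p).mp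
    push_cast
    linear_combination hgoal
  obtain ⟨d, hd⟩ := hint
  refine ⟨d, ?_⟩
  have hcInt : (((2*k).choose k : ℕ) : ℤ) = (p : ℤ) * c := by exact_mod_cast hc
  rw [hcInt]
  linear_combination (p:ℤ) * hd

/-- For a prime `p > 3` and `1 ≤ k ≤ p-1`:
`k·C(2k,k)·C(2(p-k), p-k) ≡ (-1)^{⌊2k/p⌋-1}·2p (mod p²)` as integers, where
the sign `(-1)^{⌊2k/p⌋-1}` is computed in the unit group `ℤˣ` (with integer
exponent `⌊2k/p⌋ - 1`). -/
theorem k_mul_central_binomials_congr (p : ℕ) (hp : p.Prime) (hp3 : 3 < p)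
    (k : ℕ) (hk1 : 1 ≤ k) (hk2 : k ≤ p - 1) :
    ((k : ℤ) * ((2 * k).choose k : ℤ) * ((2 * (p - k)).choose (p - k) : ℤ)) ≡
      (((-1 : ℤˣ) ^ (((2 * k / p : ℕ) : ℤ) - 1) : ℤˣ) : ℤ) * 2 * (p : ℤ)
      [ZMOD ((p : ℤ) ^ 2)] := by
  set j : ℕ := p - k with hjdef
  have hkj : k + j = p := by omega
  have hj1 : 1 ≤ j := by omega
  rcases le_or_gt p (2*k) with h2k | h2k
  · -- sign is +1
    have hdiv : 2*k/p = 1 := by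
      apply Nat.div_eq_of_lt_le (by omega) (by omega)
    have hsign : (((-1 : ℤˣ) ^ (((2 * k / p : ℕ) : ℤ) - 1) : ℤˣ) : ℤ) = 1 := by
      rw [hdiv]; norm_num
    rw [hsign]
    have h := main_dvd p k j hp hp3 hkj hj1 h2k
    have h' : ((1:ℤ) * 2 * p) ≡ ((k : ℤ) * ((2 * k).choose k : ℤ) * ((2 * j).choose j : ℤ))
        [ZMOD ((p : ℤ) ^ 2)] := by
      rw [Int.modEq_iff_dvd]
      convert h using 1
      ring
    exact h'.symm
  · -- sign is -1
    have h2j : p ≤ 2*j := by omega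
    have hdiv : 2*k/p = 0 := Nat.div_eq_of_lt (by omega)
    have hsign : (((-1 : ℤˣ) ^ (((2 * k / p : ℕ) : ℤ) - 1) : ℤˣ) : ℤ) = -1 := by
      rw [hdiv]
      norm_num
    rw [hsign]
    have h := main_dvd p j k hp hp3 (by omega) hk1 h2j
    have hpC : (p : ℤ) ∣ (((2*j).choose j : ℕ) : ℤ) := by
      exact_mod_cast Int.natCast_dvd_natCast.mpr
        (hp.dvd_choose (by omega) (by omega) h2j)
    have hkint : (k : ℤ) = (p : ℤ) - (j : ℤ) := by
      have : ((k + j : ℕ) : ℤ) = (p : ℤ) := by rw [hkj]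
      push_cast at this; linarith
    have hd2 : ((p:ℤ))^2 ∣ (p : ℤ) * (((2*k).choose k : ℤ) * ((2*j).choose j : ℤ)) := by
      obtain ⟨d, hd⟩ := hpC
      exact ⟨((2*k).choose k : ℤ) * d, by rw [hd]; ring⟩
    have key : ((p:ℤ))^2 ∣ ((k : ℤ) * ((2*k).choose k : ℤ) * ((2*j).choose j : ℤ) + 2*p) := by
      have heq : (k : ℤ) * ((2*k).choose k : ℤ) * ((2*j).choose j : ℤ) + 2*p
          = (p : ℤ) * (((2*k).choose k : ℤ) * ((2*j).choose j : ℤ))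
            - ((j:ℤ) * ((2*j).choose j : ℤ) * ((2*k).choose k : ℤ) - 2*p) := by
        rw [hkint]; ring
      rw [heq]
      exact dvd_sub hd2 h
    have h' : ((-1:ℤ) * 2 * p) ≡ ((k : ℤ) * ((2 * k).choose k : ℤ) * ((2 * j).choose j : ℤ))
        [ZMOD ((p : ℤ) ^ 2)] := by
      rw [Int.modEq_iff_dvd]
      convert key using 1
      ring
    exact h'.symm
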